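/- Let K be a field of characteristic 0, γ ≠ 1/4 in K, and m ∈ K. If g_{γ,m}(x) = (x-γ)² + m + γ is irreducible over K and g²_{γ,m}(x) is reducible over K, then there exists c₁ ∈ K \ {-1,1} with c₁⁴ + 4mc₁² - 4m - 4γ = 0, i.e., m = (c₁⁴ - 4γ)/(4 - 4c₁²). -/

import Mathlib

open Polynomial

private lemma monicDeg2 {K : Type*} [Field K] (p : K[X]) (hm : p.Monic)
    (hd : p.natDegree = 2) :
    ∃ a b : K, p = X ^ 2 + C a * X + C b := by
  refine ⟨p.coeff 1, p.coeff 0, ?_⟩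
  ext n
  have h2 : p.coeff 2 = 1 := by
    have := hm.coeff_natDegree
    rwa [hd] at this
  rcases n with _ | _ | _ | n
  · simp [coeff_X_pow]
  · simp [coeff_X_pow]
  · simp [coeff_X_pow, h2]
  · have h0 : p.coeff (n + 3) = 0 := coeff_eq_zero_of_natDegree_lt (by omega)
    rw [h0]
    simp only [coeff_add, coeff_C_mul, coeff_X_pow, coeff_C, coeff_X]
    have h3 : ¬ (n + 3 = 2) := by omega
    have h4 : ¬ ((1 : ℕ) = n + 3) := by omega
    have h5 : ¬ (n + 3 = 0) := by omega
    simp [h3, h4, h5]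

private lemma unit_of_ndeg_zero {K : Type*} [Field K] {p : K[X]} (h : p.natDegree = 0)
    (hp : p ≠ 0) : IsUnit p := by
  rw [eq_C_of_natDegree_eq_zero h]
  rw [eq_C_of_natDegree_eq_zero h] at hp
  exact isUnit_C.mpr (isUnit_iff_ne_zero.mpr (fun hc => hp (by rw [hc, map_zero])))

theorem stmt_16 (K : Type*) [Field K] [CharZero K] (γ m : K) (hγ : γ ≠ 1 / 4)
    (hirr : Irreducible ((X - C γ) ^ 2 + C m + C γ))
    (hred : ¬ Irreducible
      (((X - C γ) ^ 2 + C m + C γ).comp ((X - C γ) ^ 2 + C m + C γ))) :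
    ∃ c₁ : K, c₁ ≠ -1 ∧ c₁ ≠ 1 ∧ c₁ ^ 4 + 4 * m * c₁ ^ 2 - 4 * m - 4 * γ = 0 ∧
      m = (c₁ ^ 4 - 4 * γ) / (4 - 4 * c₁ ^ 2) := by
  set g : K[X] := (X - C γ) ^ 2 + C m + C γ with hgdef
  have hgm : g.Monic := by unfold g; monicity!
  have hgd : g.natDegree = 2 := by unfold g; compute_degree!
  -- g has no root
  have hnr : ∀ a : K, g.eval a ≠ 0 := by
    intro a ha
    obtain ⟨t, ht⟩ := dvd_iff_isRoot.mpr ha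
    rcases hirr.isUnit_or_isUnit (hgdef ▸ ht) with h | h
    · exact (not_isUnit_of_natDegree_pos _ (by simp [natDegree_X_sub_C])) h
    · have h0 : t ≠ 0 := by
        rintro rfl
        simp only [mul_zero] at ht
        exact hgm.ne_zero ht
      have : g.natDegree = 1 + t.natDegree := by
        rw [ht, natDegree_mul (X_sub_C_ne_zero a) h0, natDegree_X_sub_C]
      exact not_isUnit_of_natDegree_pos _ (by omega) h
  -- the shifted iterate
  set Q : K[X] := X ^ 4 + C (2 * m) * X ^ 2 + C (m ^ 2 + m + γ) with hQdef
  have hQm : Q.Monic := by unfold Q; monicity!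
  have hQd : Q.natDegree = 4 := by unfold Q; compute_degree!
  have hQeval : ∀ x : K, Q.eval x = g.eval (x ^ 2 + m + γ) := by
    intro x
    simp only [hQdef, hgdef, eval_add, eval_mul, eval_pow, eval_X, eval_C, eval_sub]
    ring
  have hQnoroot : ∀ x : K, Q.eval x ≠ 0 := fun x hx => hnr _ (hQeval x ▸ hx)
  have hQcomp : (g.comp g).comp (X + C γ) = Q := by
    simp only [hgdef, hQdef, add_comp, sub_comp, pow_comp, X_comp, C_comp, mul_comp, C_add,
      C_mul, C_pow, map_ofNat]
    ring
  have hggm : (g.comp g).Monic := hgm.comp hgm (by rw [hgd]; omega)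
  -- Q is not irreducible
  have hQred : ¬ Irreducible Q := by
    intro hQ
    apply hred
    constructor
    · apply not_isUnit_of_natDegree_pos
      rw [natDegree_comp, hgd]; omega
    · intro u v huv
      have hc : Q = u.comp (X + C γ) * v.comp (X + C γ) := by
        rw [← hQcomp, huv, mul_comp]
      rcases hQ.isUnit_or_isUnit hc with h | h
      · left
        have hu0 : u ≠ 0 := fun h0 => hggm.ne_zero (by rw [huv, h0, zero_mul])
        have := natDegree_eq_zero_of_isUnit h
        rw [natDegree_comp, natDegree_X_add_C, mul_one] at this
        exact unit_of_ndeg_zero this hu0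
      · right
        have hv0 : v ≠ 0 := fun h0 => hggm.ne_zero (by rw [huv, h0, mul_zero])
        have := natDegree_eq_zero_of_isUnit h
        rw [natDegree_comp, natDegree_X_add_C, mul_one] at this
        exact unit_of_ndeg_zero this hv0
  -- no degree-1 factor of Q
  have hno1 : ∀ u v : K[X], Q = u * v → u.natDegree ≠ 1 := by
    intro u v huv h1
    have hu := eq_X_add_C_of_natDegree_le_one (le_of_eq h1)
    have hlc : u.coeff 1 ≠ 0 := by
      intro hc
      rw [hc, map_zero, zero_mul, zero_add] at hu
      rw [hu, natDegree_C] at h1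
      exact one_ne_zero h1.symm
    apply hQnoroot (-(u.coeff 0) / u.coeff 1)
    rw [huv, eval_mul]
    have : u.eval (-(u.coeff 0) / u.coeff 1) = 0 := by
      rw [congrArg (eval (-(u.coeff 0) / u.coeff 1)) hu]
      simp only [eval_add, eval_mul, eval_C, eval_X]
      field_simp
      ring
    rw [this, zero_mul]
  -- get a monic factorization into two quadratics
  obtain ⟨q, r, hqm, hrm, hqd, hrd, hfac⟩ :
      ∃ q r : K[X], q.Monic ∧ r.Monic ∧ q.natDegree = 2 ∧ r.natDegree = 2 ∧ Q = q * r := by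
    have hQne : Q ≠ 0 := hQm.ne_zero
    have hQnu : ¬ IsUnit Q := not_isUnit_of_natDegree_pos _ (by omega)
    have hex : ¬ ∀ u v : K[X], Q = u * v → IsUnit u ∨ IsUnit v :=
      fun h => hQred ⟨hQnu, h⟩
    push_neg at hex
    obtain ⟨u, v, huv, hu, hv⟩ := hex
    have hu0 : u ≠ 0 := fun h0 => hQne (by rw [huv, h0, zero_mul])
    have hv0 : v ≠ 0 := fun h0 => hQne (by rw [huv, h0, mul_zero])
    have hsum : u.natDegree + v.natDegree = 4 := by
      rw [← natDegree_mul hu0 hv0, ← huv, hQd]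
    have hu1 : u.natDegree ≠ 0 := fun h => hu (unit_of_ndeg_zero h hu0)
    have hv1 : v.natDegree ≠ 0 := fun h => hv (unit_of_ndeg_zero h hv0)
    have hud : u.natDegree = 2 := by
      have h1 := hno1 u v huv
      have h2 := hno1 v u (by rw [huv, mul_comm])
      omega
    have hvd : v.natDegree = 2 := by omega
    refine ⟨C (u.leadingCoeff)⁻¹ * u, C (v.leadingCoeff)⁻¹ * v, ?_, ?_, ?_, ?_, ?_⟩
    · unfold Monic
      rw [leadingCoeff_mul, leadingCoeff_C, inv_mul_cancel₀ (leadingCoeff_ne_zero.mpr hu0)]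
    · unfold Monic
      rw [leadingCoeff_mul, leadingCoeff_C, inv_mul_cancel₀ (leadingCoeff_ne_zero.mpr hv0)]
    · rw [natDegree_mul (by simp [leadingCoeff_ne_zero.mpr hu0]) hu0, natDegree_C, hud]
    · rw [natDegree_mul (by simp [leadingCoeff_ne_zero.mpr hv0]) hv0, natDegree_C, hvd]
    · have hlc : u.leadingCoeff * v.leadingCoeff = 1 := by
        have := hQm
        unfold Monic at this
        rw [huv, leadingCoeff_mul] at this
        exact this
      have h1 : (u.leadingCoeff)⁻¹ * (v.leadingCoeff)⁻¹ = 1 := by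
        rw [← mul_inv, hlc, inv_one]
      calc Q = C ((u.leadingCoeff)⁻¹ * (v.leadingCoeff)⁻¹) * (u * v) := by
              rw [h1, map_one, one_mul, huv]
        _ = C (u.leadingCoeff)⁻¹ * u * (C (v.leadingCoeff)⁻¹ * v) := by
              rw [C_mul]; ring
  obtain ⟨a, b, hq2⟩ := monicDeg2 q hqm hqd
  obtain ⟨c, d, hr2⟩ := monicDeg2 r hrm hrd
  have key : X ^ 4 + C (2 * m) * X ^ 2 + C (m ^ 2 + m + γ)
      = X ^ 4 + C (a + c) * X ^ 3 + C (b + d + a * c) * X ^ 2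
        + C (a * d + b * c) * X + C (b * d) := by
    rw [hQdef] at hfac
    rw [hfac, hq2, hr2]
    simp only [C_add, C_mul, C_pow, map_ofNat]
    ring
  have e3 : a + c = 0 := by
    have h := congrArg (fun p : K[X] => p.coeff 3) key
    simp only [coeff_add, coeff_C_mul, coeff_X_pow, coeff_C, coeff_X] at h
    norm_num at h
    linear_combination -h
  have e2 : b + d + a * c = 2 * m := by
    have h := congrArg (fun p : K[X] => p.coeff 2) key
    simp only [coeff_add, coeff_C_mul, coeff_X_pow, coeff_C, coeff_X] at h
    norm_num at h
    linear_combination -h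
  have e1 : a * d + b * c = 0 := by
    have h := congrArg (fun p : K[X] => p.coeff 1) key
    simp only [coeff_add, coeff_C_mul, coeff_X_pow, coeff_C, coeff_X] at h
    norm_num at h
    linear_combination -h
  have e0 : b * d = m ^ 2 + m + γ := by
    have h := congrArg (fun p : K[X] => p.coeff 0) key
    simp only [coeff_add, coeff_C_mul, coeff_X_pow, coeff_C, coeff_X] at h
    norm_num at h
    linear_combination -h
  have hcc : c = -a := by linear_combination e3
  subst hcc
  have hsplit : a * (d - b) = 0 := by linear_combination e1
  rcases mul_eq_zero.mp hsplit with h0 | hdb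
  · -- a = 0 : contradiction, g would have a root
    exfalso
    apply hnr (b - m + γ)
    rw [hgdef]
    simp only [eval_add, eval_sub, eval_pow, eval_X, eval_C]
    linear_combination b * e2 - e0 + (a * b) * h0
  · have hdb' : d = b := by linear_combination hdb
    subst hdb'
    have keyeq : a ^ 4 + 4 * m * a ^ 2 - 4 * m - 4 * γ = 0 := by
      linear_combination 4 * e0 - (a ^ 2 + 2 * m + 2 * d) * e2
    have hne1 : a ≠ -1 := by
      intro h
      apply hγ
      rw [h] at keyeq
      linear_combination (-1/4 : K) * keyeq
    have hne2 : a ≠ 1 := by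
      intro h
      apply hγ
      rw [h] at keyeq
      linear_combination (-1/4 : K) * keyeq
    have hden : 4 - 4 * a ^ 2 ≠ 0 := by
      intro h
      apply hγ
      linear_combination (-1/4 : K) * keyeq - (a ^ 2 + 1 + 4 * m) / 16 * h
    refine ⟨a, hne1, hne2, keyeq, ?_⟩
    rw [eq_div_iff hden]
    linear_combination -keyeq
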